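/- The variance of the feature hashing inner-product estimator equals (1/m)(Σ_{i≠j} x_i² y_j² + Σ_{i≠j} x_i y_i x_j y_j), where the sums range over ordered pairs of distinct indices in {1,...,n}. -/

import Mathlib

open Finset

/-- The global feature hashing estimator of the inner product of `x` and `y`. -/
def gEst (n m : ℕ) (h : Fin n → Fin m) (s : Fin n → Bool) (x y : Fin n → ℝ) : ℝ :=
  ∑ j : Fin m,
    (∑ i : Fin n, if h i = j then (if s i then (1:ℝ) else -1) * x i else 0) *
    (∑ i : Fin n, if h i = j then (if s i then (1:ℝ) else -1) * y i else 0)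

noncomputable def eps (b : Bool) : ℝ := if b then 1 else -1

lemma sum_signs (n : ℕ) (c : Fin n → ℕ) :
    ∑ s : Fin n → Bool, ∏ a, (eps (s a))^(c a)
    = if ∀ a, Even (c a) then (2:ℝ)^n else 0 := by
  rw [← Fintype.prod_sum (fun (a : Fin n) (b : Bool) => (eps b)^(c a))]
  split_ifs with h
  · rw [show ((2:ℝ)^n) = ∏ _a : Fin n, (2:ℝ) by simp]
    refine Finset.prod_congr rfl fun a _ => ?_
    rw [Fintype.sum_bool]
    simp [eps, (h a).neg_one_pow]; norm_num
  · push_neg at h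
    obtain ⟨a, ha⟩ := h
    refine Finset.prod_eq_zero (mem_univ a) ?_
    rw [Fintype.sum_bool]
    simp [eps, (Nat.not_even_iff_odd.mp ha).neg_one_pow]

lemma eps_single {n : ℕ} (s : Fin n → Bool) (i : Fin n) :
    eps (s i) = ∏ a, (eps (s a))^(if a = i then 1 else 0) := by
  have : ∀ a : Fin n, (eps (s a))^(if a = i then 1 else 0) = if a = i then eps (s a) else 1 := by
    intro a; split_ifs <;> simp
  simp only [this]
  rw [Finset.prod_ite_eq' Finset.univ i (fun a => eps (s a))]
  simp

lemma eps_four {n : ℕ} (s : Fin n → Bool) (i k i' k' : Fin n) :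
    eps (s i) * eps (s k) * (eps (s i') * eps (s k'))
    = ∏ a, (eps (s a))^((if a = i then 1 else 0) + (if a = k then 1 else 0)
        + (if a = i' then 1 else 0) + (if a = k' then 1 else 0)) := by
  simp only [pow_add, Finset.prod_mul_distrib, ← eps_single]; ring

lemma core_sign {n : ℕ} (i k i' k' : Fin n) (hik : i ≠ k) (hik' : i' ≠ k') :
    ∑ s : Fin n → Bool, eps (s i) * eps (s k) * (eps (s i') * eps (s k'))
    = if (i' = i ∧ k' = k) ∨ (i' = k ∧ k' = i) then (2:ℝ)^n else 0 := by
  simp only [eps_four _ i k i' k']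
  rw [sum_signs]
  congr 1
  rw [eq_iff_iff]
  constructor
  · intro h
    have hI := h i
    have hK := h k
    have hI' := h i'
    have hK' := h k'
    clear h
    by_cases e1 : i' = i <;> by_cases e2 : i' = k <;> by_cases e3 : k' = i <;> by_cases e4 : k' = k <;>
      simp_all [Nat.even_iff] <;> omega
  · rintro (⟨h1, h2⟩ | ⟨h1, h2⟩) <;> subst h1 <;> subst h2 <;>
      · intro a
        split_ifs <;> decide

lemma sum_hash {n m : ℕ} (hm : 0 < m) (i k : Fin n) (hik : i ≠ k) :
    ∑ h : Fin n → Fin m, (if h i = h k then (1:ℝ) else 0) = (m:ℝ)^n / m := by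
  have hn : 0 < n := Fin.pos i
  rw [← Equiv.sum_comp (Equiv.funSplitAt k (Fin m)).symm
    (fun h : Fin n → Fin m => if h i = h k then (1:ℝ) else 0)]
  have key : ∀ p : Fin m × ({ j // j ≠ k } → Fin m),
      (if (Equiv.funSplitAt k (Fin m)).symm p i = (Equiv.funSplitAt k (Fin m)).symm p k
        then (1:ℝ) else 0)
      = if p.2 ⟨i, hik⟩ = p.1 then 1 else 0 := by
    intro p
    simp [Equiv.funSplitAt_symm_apply, dif_neg hik]
  simp only [key]
  rw [Fintype.sum_prod_type, Finset.sum_comm]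
  simp only [Finset.sum_ite_eq, Finset.mem_univ, if_pos]
  rw [Finset.sum_const]
  simp only [Finset.card_univ, Fintype.card_fun, Fintype.card_fin, nsmul_eq_mul, mul_one]
  have hcard : Fintype.card { j : Fin n // j ≠ k } = n - 1 := by
    simp [Fintype.card_subtype_compl]
  rw [hcard, eq_div_iff (by positivity : (m:ℝ) ≠ 0)]
  push_cast
  rw [← pow_succ]
  congr 1
  omega

lemma core {n m : ℕ} (hm : 0 < m) (i k i' k' : Fin n) (hik : i ≠ k) (hik' : i' ≠ k') :
    ∑ h : Fin n → Fin m, ∑ s : Fin n → Bool,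
      (if h i = h k then eps (s i) * eps (s k) else 0) *
      (if h i' = h k' then eps (s i') * eps (s k') else 0)
    = if (i' = i ∧ k' = k) ∨ (i' = k ∧ k' = i) then (m:ℝ)^n / m * 2^n else 0 := by
  have step : ∀ (h : Fin n → Fin m) (s : Fin n → Bool),
      (if h i = h k then eps (s i) * eps (s k) else 0) *
      (if h i' = h k' then eps (s i') * eps (s k') else 0)
      = ((if h i = h k then (1:ℝ) else 0) * (if h i' = h k' then (1:ℝ) else 0)) *
        (eps (s i) * eps (s k) * (eps (s i') * eps (s k'))) := by
    intro h s
    split_ifs <;> ring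
  simp only [step]
  have inner : ∀ h : Fin n → Fin m,
      ∑ s : Fin n → Bool,
        ((if h i = h k then (1:ℝ) else 0) * (if h i' = h k' then (1:ℝ) else 0)) *
        (eps (s i) * eps (s k) * (eps (s i') * eps (s k')))
      = ((if h i = h k then (1:ℝ) else 0) * (if h i' = h k' then (1:ℝ) else 0)) *
        (if (i' = i ∧ k' = k) ∨ (i' = k ∧ k' = i) then (2:ℝ)^n else 0) := by
    intro h
    rw [← Finset.mul_sum, core_sign i k i' k' hik hik']
  simp only [inner]
  by_cases hp : (i' = i ∧ k' = k) ∨ (i' = k ∧ k' = i)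
  · have hind : ∀ h : Fin n → Fin m,
        (if h i = h k then (1:ℝ) else 0) * (if h i' = h k' then (1:ℝ) else 0)
        = if h i = h k then (1:ℝ) else 0 := by
      intro h
      rcases hp with ⟨h1, h2⟩ | ⟨h1, h2⟩ <;> subst h1 <;> subst h2 <;>
        split_ifs with c1 c2 <;>
          first
            | ring1
            | exact absurd (Eq.symm c1) c2
            | exact absurd (Eq.symm c2) c1
    simp only [hind, if_pos hp]
    rw [← Finset.sum_mul, sum_hash hm i k hik]
  · rw [if_neg hp]
    simp [hp]

lemma sum_delta {m : ℕ} (u v : Fin m) (a b : ℝ) :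
    (∑ j : Fin m, (if u = j then a else 0) * (if v = j then b else 0))
    = if u = v then a * b else 0 := by
  simp only [ite_mul, zero_mul, mul_ite, mul_zero, Finset.sum_ite_eq, Finset.mem_univ, if_pos]

lemma gEst_expand (n m : ℕ) (h : Fin n → Fin m) (s : Fin n → Bool) (x y : Fin n → ℝ) :
    gEst n m h s x y = ∑ i : Fin n, ∑ k : Fin n,
      if h i = h k then eps (s i) * eps (s k) * (x i * y k) else 0 := by
  unfold gEst
  simp only [Finset.sum_mul_sum]
  rw [Finset.sum_comm]
  refine Finset.sum_congr rfl fun i _ => ?_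
  rw [Finset.sum_comm]
  refine Finset.sum_congr rfl fun k _ => ?_
  rw [sum_delta (h i) (h k)]
  simp only [eps]
  by_cases hc : h i = h k
  · rw [if_pos hc, if_pos hc]; ring
  · rw [if_neg hc, if_neg hc]

lemma splitite {α : Type*} [DecidableEq α] (C : ℝ) (p1 p2 q1 q2 : α) (hp : p1 ≠ p2) :
    (if (q1 = p1 ∧ q2 = p2) ∨ (q1 = p2 ∧ q2 = p1) then C else 0)
    = (if q1 = p1 then (if q2 = p2 then C else 0) else 0)
      + (if q1 = p2 then (if q2 = p1 then C else 0) else 0) := by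
  by_cases a1 : q1 = p1 <;> by_cases a2 : q2 = p2 <;>
    by_cases b1 : q1 = p2 <;> by_cases b2 : q2 = p1 <;> simp_all

lemma sum_swap4 {A B C D : Type*} (sa : Finset A) (sb : Finset B) (sc : Finset C)
    (sd : Finset D) (f : A → B → C → D → ℝ) :
    ∑ a ∈ sa, ∑ b ∈ sb, ∑ c ∈ sc, ∑ d ∈ sd, f a b c d
    = ∑ c ∈ sc, ∑ d ∈ sd, ∑ a ∈ sa, ∑ b ∈ sb, f a b c d := by
  calc ∑ a ∈ sa, ∑ b ∈ sb, ∑ c ∈ sc, ∑ d ∈ sd, f a b c d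
      = ∑ a ∈ sa, ∑ c ∈ sc, ∑ b ∈ sb, ∑ d ∈ sd, f a b c d :=
        Finset.sum_congr rfl fun a _ => Finset.sum_comm
    _ = ∑ c ∈ sc, ∑ a ∈ sa, ∑ b ∈ sb, ∑ d ∈ sd, f a b c d := Finset.sum_comm
    _ = ∑ c ∈ sc, ∑ a ∈ sa, ∑ d ∈ sd, ∑ b ∈ sb, f a b c d :=
        Finset.sum_congr rfl fun c _ => Finset.sum_congr rfl fun a _ => Finset.sum_comm
    _ = ∑ c ∈ sc, ∑ d ∈ sd, ∑ a ∈ sa, ∑ b ∈ sb, f a b c d :=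
        Finset.sum_congr rfl fun c _ => Finset.sum_comm

lemma offDiag_eq_filter' {α : Type*} [DecidableEq α] (s : Finset α) :
    s.offDiag = (s ×ˢ s).filter (fun a => a.1 ≠ a.2) := by
  ext; simp [and_assoc]

lemma gEst_dev (n m : ℕ) (h : Fin n → Fin m) (s : Fin n → Bool) (x y : Fin n → ℝ) :
    gEst n m h s x y - (∑ i : Fin n, x i * y i)
    = ∑ p ∈ Finset.univ.offDiag,
        (if h p.1 = h p.2 then eps (s p.1) * eps (s p.2) else 0) * (x p.1 * y p.2) := by
  have split : ∀ i k : Fin n,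
      (if h i = h k then eps (s i) * eps (s k) * (x i * y k) else 0)
      = (if i = k then x i * y i else 0)
        + (if i ≠ k then (if h i = h k then eps (s i) * eps (s k) else 0) * (x i * y k) else 0) := by
    intro i k
    by_cases hik : i = k
    · subst hik
      cases hsi : s i <;> simp [eps, hsi]
    · simp [hik, ite_mul]
  have offd : (∑ p ∈ Finset.univ.offDiag,
        (if h p.1 = h p.2 then eps (s p.1) * eps (s p.2) else 0) * (x p.1 * y p.2))
      = ∑ i : Fin n, ∑ k : Fin n,
        if i ≠ k then (if h i = h k then eps (s i) * eps (s k) else 0) * (x i * y k) else 0 := by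
    rw [offDiag_eq_filter', Finset.sum_filter, Finset.sum_product]
  rw [gEst_expand, offd]
  simp only [split, Finset.sum_add_distrib]
  simp only [Finset.sum_ite_eq, Finset.mem_univ, if_pos]
  ring

/-- Variance of the feature hashing inner-product estimator:
`V = (1/m) (Σ_{i≠j} x_i² y_j² + Σ_{i≠j} x_i y_i x_j y_j)`, sums over ordered distinct pairs. -/
theorem featureHashing_variance (n m : ℕ) (hm : 0 < m) (x y : Fin n → ℝ) :
    (∑ h : Fin n → Fin m, ∑ s : Fin n → Bool,
        (gEst n m h s x y - ∑ i : Fin n, x i * y i) ^ 2)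
      / ((m : ℝ) ^ n * 2 ^ n)
    = (1 / (m : ℝ)) *
        ((∑ i : Fin n, ∑ j : Fin n, if i ≠ j then x i ^ 2 * y j ^ 2 else 0)
          + ∑ i : Fin n, ∑ j : Fin n, if i ≠ j then x i * y i * (x j * y j) else 0) := by
  set od := (Finset.univ : Finset (Fin n)).offDiag with hod
  set C : ℝ := (m:ℝ)^n / m * 2^n with hC
  -- Step 1: numerator equals quadruple sum
  have step1 : (∑ h : Fin n → Fin m, ∑ s : Fin n → Bool,
        (gEst n m h s x y - ∑ i : Fin n, x i * y i) ^ 2)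
      = ∑ p ∈ od, ∑ q ∈ od, ∑ h : Fin n → Fin m, ∑ s : Fin n → Bool,
          ((if h p.1 = h p.2 then eps (s p.1) * eps (s p.2) else 0) * (x p.1 * y p.2)) *
          ((if h q.1 = h q.2 then eps (s q.1) * eps (s q.2) else 0) * (x q.1 * y q.2)) := by
    have e1 : ∀ (h : Fin n → Fin m) (s : Fin n → Bool),
        (gEst n m h s x y - ∑ i : Fin n, x i * y i) ^ 2
        = ∑ p ∈ od, ∑ q ∈ od,
          ((if h p.1 = h p.2 then eps (s p.1) * eps (s p.2) else 0) * (x p.1 * y p.2)) *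
          ((if h q.1 = h q.2 then eps (s q.1) * eps (s q.2) else 0) * (x q.1 * y q.2)) := by
      intro h s
      rw [gEst_dev, sq, Finset.sum_mul_sum]
    simp only [e1]
    exact sum_swap4 _ _ _ _ _
  -- Step 2: evaluate inner double expectation
  have step2 : ∀ p ∈ od, ∀ q ∈ od,
      (∑ h : Fin n → Fin m, ∑ s : Fin n → Bool,
          ((if h p.1 = h p.2 then eps (s p.1) * eps (s p.2) else 0) * (x p.1 * y p.2)) *
          ((if h q.1 = h q.2 then eps (s q.1) * eps (s q.2) else 0) * (x q.1 * y q.2)))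
      = ((x p.1 * y p.2) * (x q.1 * y q.2)) *
          (if (q.1 = p.1 ∧ q.2 = p.2) ∨ (q.1 = p.2 ∧ q.2 = p.1) then C else 0) := by
    intro p hp q hq
    rw [Finset.mem_offDiag] at hp hq
    have rearr : ∀ (h : Fin n → Fin m) (s : Fin n → Bool),
        ((if h p.1 = h p.2 then eps (s p.1) * eps (s p.2) else 0) * (x p.1 * y p.2)) *
        ((if h q.1 = h q.2 then eps (s q.1) * eps (s q.2) else 0) * (x q.1 * y q.2))
        = ((x p.1 * y p.2) * (x q.1 * y q.2)) *
          ((if h p.1 = h p.2 then eps (s p.1) * eps (s p.2) else 0) *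
           (if h q.1 = h q.2 then eps (s q.1) * eps (s q.2) else 0)) := by
      intro h s; ring
    simp only [rearr, ← Finset.mul_sum]
    rw [core hm p.1 p.2 q.1 q.2 hp.2.2 hq.2.2]
  -- Step 3: collapse the q-sum
  have step3 : ∀ p ∈ od,
      (∑ q ∈ od, ((x p.1 * y p.2) * (x q.1 * y q.2)) *
          (if (q.1 = p.1 ∧ q.2 = p.2) ∨ (q.1 = p.2 ∧ q.2 = p.1) then C else 0))
      = (x p.1 * y p.2) * (x p.1 * y p.2) * C
        + (x p.1 * y p.2) * (x p.2 * y p.1) * C := by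
    intro p hp
    rw [Finset.mem_offDiag] at hp
    have hsub : od ⊆ Finset.univ ×ˢ Finset.univ := by
      rw [hod, offDiag_eq_filter']; exact Finset.filter_subset _ _
    have vanish : ∀ q ∈ Finset.univ ×ˢ Finset.univ, q ∉ od →
        ((x p.1 * y p.2) * (x q.1 * y q.2)) *
          (if (q.1 = p.1 ∧ q.2 = p.2) ∨ (q.1 = p.2 ∧ q.2 = p.1) then C else 0) = 0 := by
      intro q _ hqod
      have hq12 : q.1 = q.2 := by
        by_contra hne
        exact hqod (by rw [hod]; exact Finset.mem_offDiag.mpr ⟨Finset.mem_univ _, Finset.mem_univ _, hne⟩)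
      have : ¬((q.1 = p.1 ∧ q.2 = p.2) ∨ (q.1 = p.2 ∧ q.2 = p.1)) := by
        rintro (⟨h1, h2⟩ | ⟨h1, h2⟩)
        · exact hp.2.2 (h1 ▸ h2 ▸ hq12)
        · exact hp.2.2 (h2 ▸ h1 ▸ hq12).symm
      rw [if_neg this, mul_zero]
    rw [Finset.sum_subset hsub vanish, Finset.sum_product]
    simp only [fun q1 q2 => splitite C p.1 p.2 q1 q2 hp.2.2, mul_add, Finset.sum_add_distrib]
    simp only [mul_ite, mul_zero, Finset.sum_ite_irrel, Finset.sum_const_zero,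
      Finset.sum_ite_eq', Finset.mem_univ, if_pos]
  -- Combine
  rw [step1]
  rw [Finset.sum_congr rfl (fun p hp => Finset.sum_congr rfl (fun q hq => step2 p hp q hq))]
  rw [Finset.sum_congr rfl step3]
  -- RHS conversion to offDiag sums
  have offd1 : (∑ i : Fin n, ∑ j : Fin n, if i ≠ j then x i ^ 2 * y j ^ 2 else 0)
      = ∑ p ∈ od, x p.1 ^ 2 * y p.2 ^ 2 := by
    rw [hod, offDiag_eq_filter', Finset.sum_filter, Finset.sum_product]
  have offd2 : (∑ i : Fin n, ∑ j : Fin n, if i ≠ j then x i * y i * (x j * y j) else 0)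
      = ∑ p ∈ od, x p.1 * y p.1 * (x p.2 * y p.2) := by
    rw [hod, offDiag_eq_filter', Finset.sum_filter, Finset.sum_product]
  rw [offd1, offd2]
  rw [Finset.sum_add_distrib]
  have hm0 : (m:ℝ) ≠ 0 := by positivity
  have hmn : ((m:ℝ))^n ≠ 0 := by positivity
  have h2n : ((2:ℝ))^n ≠ 0 := by positivity
  have e1 : ∑ p ∈ od, x p.1 * y p.2 * (x p.1 * y p.2) * C = (∑ p ∈ od, x p.1 ^2 * y p.2 ^2) * C := by
    rw [Finset.sum_mul]; exact Finset.sum_congr rfl fun p _ => by ring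
  have e2 : ∑ p ∈ od, x p.1 * y p.2 * (x p.2 * y p.1) * C
      = (∑ p ∈ od, x p.1 * y p.1 * (x p.2 * y p.2)) * C := by
    rw [Finset.sum_mul]; exact Finset.sum_congr rfl fun p _ => by ring
  rw [e1, e2, hC]
  field_simp
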